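/- Let d, i, j, k be integers with d > 0, i > 0, 0 ≤ j ≤ d−i, and j ≤ k ≤ d. Then Σ_{ℓ=0}^{i} binom(i,ℓ) · binom(d−i−j, d−k−ℓ) · 2^{i−ℓ} = Σ_{m=0}^{i−1} binom(i−1,m) · (2·binom(d−m−j−1, d−k) + binom(d−m−j−1, d−k−1)). -/

import Mathlib

open Finset Polynomial
open scoped BigOperators

/-- The cyclic successor of `a` on `{1, …, d}`: `d ⊕ 1 = 1`. -/
def cyc (d a : ℕ) : ℕ := if a = d then 1 else a + 1

/-- The cyclic interval `[k, l]` of `{1, …, d}`; it is wrapped when `k > l`. -/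
def cyclicInterval (d k l : ℕ) : Finset ℕ :=
  if k ≤ l then Finset.Icc k l else Finset.Icc k d ∪ Finset.Icc 1 l

/-- `P` is a set partition of `{1, …, d}`, given as its finite set of blocks. -/
def IsPartitionOf (d : ℕ) (P : Finset (Finset ℕ)) : Prop :=
  (∀ B ∈ P, B ⊆ Finset.Icc 1 d ∧ B.Nonempty) ∧
    ∀ x ∈ Finset.Icc 1 d, ∃! B, B ∈ P ∧ x ∈ B

/-- `P` is noncrossing: there are no `a < b < c < e` with `a, c` in one block and
`b, e` in a different block. -/
def Noncrossing (P : Finset (Finset ℕ)) : Prop :=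
  ∀ B₁ ∈ P, ∀ B₂ ∈ P, ∀ a b c e : ℕ,
    a < b → b < c → c < e → a ∈ B₁ → c ∈ B₁ → b ∈ B₂ → e ∈ B₂ → B₁ = B₂

/-- `P` is a noncrossing set partition of `{1, …, d}`. -/
def IsNC (d : ℕ) (P : Finset (Finset ℕ)) : Prop :=
  IsPartitionOf d P ∧ Noncrossing P

open scoped Classical in
/-- The finite set `NC(d)` of noncrossing partitions of `{1, …, d}`. -/
noncomputable def NCd (d : ℕ) : Finset (Finset (Finset ℕ)) :=
  ((Finset.Icc 1 d).powerset.powerset).filter fun P => IsNC d P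

/-- `block(π)`: the number of nonsingleton blocks. -/
def blockCount (P : Finset (Finset ℕ)) : ℕ :=
  (P.filter fun B => 2 ≤ B.card).card

/-- The number of singleton blocks of `P` contained in `U`. -/
def singIn (P : Finset (Finset ℕ)) (U : Finset ℕ) : ℕ :=
  (P.filter fun B => B.card = 1 ∧ B ⊆ U).card

open scoped Classical in
/-- The number of `a ∈ A` that are antisingletons of `P`, i.e. such that `a` and its cyclic
successor lie in the same block of `P`.  Here `A` is the set of starting points of the
internal adjacencies of a family of cyclic intervals. -/
noncomputable def antiIn (d : ℕ) (P : Finset (Finset ℕ)) (A : Finset ℕ) : ℕ :=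
  (A.filter fun a => ∃ B ∈ P, a ∈ B ∧ cyc d a ∈ B).card

/-- The weight `wt_S(π) = x^(block(π) + sing_S(π) + anti_S(π))`, where the family `S`
is recorded by the union `U` of its intervals and the set `A` of starting points of its
internal adjacencies. -/
noncomputable def wt (d : ℕ) (P : Finset (Finset ℕ)) (U A : Finset ℕ) : Polynomial ℚ :=
  X ^ (blockCount P + singIn P U + antiIn d P A)

/-- Four elements of `ZMod n` occur in this cyclic order. -/
def cyclicOrdered (n : ℕ) (a b c e : ZMod n) : Prop :=
  ∃ r : ZMod n, (a - r).val < (b - r).val ∧ (b - r).val < (c - r).val ∧ (c - r).val < (e - r).val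

/-- Two blocks on the cycle `ZMod n` cross. -/
def crosses (n : ℕ) (A B : Finset (ZMod n)) : Prop :=
  ∃ a ∈ A, ∃ c ∈ A, ∃ b ∈ B, ∃ e ∈ B, cyclicOrdered n a b c e

/-- The embedding of `[d]` into the `2d`-cycle: `i ↦ 2i - 1`. -/
def embOrig (d i : ℕ) : ZMod (2 * d) := ((2 * i - 1 : ℕ) : ZMod (2 * d))

/-- The embedding of the copy `[d]'` into the `2d`-cycle: `i' ↦ 2(d - i) mod 2d`. -/
def embCopy (d i : ℕ) : ZMod (2 * d) := ((2 * (d - i) : ℕ) : ZMod (2 * d))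

/-- The blocks of `P` (embedded via `embOrig`) together with the blocks of `Q`
(embedded via `embCopy`) form a noncrossing partition of the `2d`-cycle. -/
def SUCompat (d : ℕ) (P Q : Finset (Finset ℕ)) : Prop :=
  (∀ B₁ ∈ P, ∀ B₂ ∈ P, B₁ ≠ B₂ →
      ¬ crosses (2 * d) (B₁.image (embOrig d)) (B₂.image (embOrig d))) ∧
  (∀ B₁ ∈ Q, ∀ B₂ ∈ Q, B₁ ≠ B₂ →
      ¬ crosses (2 * d) (B₁.image (embCopy d)) (B₂.image (embCopy d))) ∧
  ∀ B₁ ∈ P, ∀ B₂ ∈ Q, ¬ crosses (2 * d) (B₁.image (embOrig d)) (B₂.image (embCopy d))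

/-- `P` refines into `Q`: every block of `P` is contained in a block of `Q`. -/
def refines (P Q : Finset (Finset ℕ)) : Prop :=
  ∀ B ∈ P, ∃ B' ∈ Q, B ⊆ B'

/-- `Q` is the Simion–Ullman complement `α(P)`: it is a partition of `{1, …, d}`
(the copy `[d]'` being identified with `[d]`), the blocks of `P` and `Q` together form a
noncrossing partition of the `2d`-cycle, and `Q` is the coarsest such partition. -/
def IsSUComplement (d : ℕ) (P Q : Finset (Finset ℕ)) : Prop :=
  IsPartitionOf d Q ∧ SUCompat d P Q ∧
    ∀ R, IsPartitionOf d R → SUCompat d P R → refines R Q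

/-- The toric `g`-polynomial of the `j`-dimensional cube:
`g_j(x) = Σ_{m=0}^{⌊j/2⌋} Catalan(j-m)·binom(j-m, m)·(x-1)^m`. -/
noncomputable def gPoly (j : ℕ) : Polynomial ℚ :=
  ∑ m ∈ Finset.range (j / 2 + 1),
    (C ((catalan (j - m) * (j - m).choose m : ℕ) : ℚ)) * (X - 1) ^ m

/-- The polynomial `Q_{d,k}(x)`, `0 ≤ k ≤ d+1`. -/
noncomputable def Qpoly (d k : ℕ) : Polynomial ℚ :=
  if k = 0 then
    (X - 1) ^ (d + 1) +
      ∑ j ∈ Finset.range (d + 1),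
        (C ((2 ^ (d - j) * d.choose j : ℕ) : ℚ)) * (X - 1) ^ (d - j) * gPoly j
  else if k ≤ d then
    ∑ j ∈ Finset.Icc (k - 1) d,
      (C ((2 ^ (d - j) * ((d - k).choose (d - j) + (d + 1 - k).choose (d - j)) : ℕ) : ℚ)) *
        (X - 1) ^ (d - j) * gPoly j
  else gPoly d

/-- The polynomial `C_{d,i,j}(x) = Σ_{k=j+1}^{i+j} (1/2)^i binom(i-1, k-1-j) Q_{d,k}(x)`. -/
noncomputable def Cpoly (d i j : ℕ) : Polynomial ℚ :=
  ∑ k ∈ Finset.Icc (j + 1) (i + j),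
    (C ((1 / 2 : ℚ) ^ i * ((i - 1).choose (k - 1 - j) : ℚ))) * Qpoly d k

/-- `wt_k(π)`: for `1 ≤ k ≤ d` the weight w.r.t. `S = {[k,d]}`; for `k = 0` the weight
w.r.t. the full circle `[1,d]^*`; for `k = d+1` the weight w.r.t. `S = ∅`. -/
noncomputable def wtk (d k : ℕ) (P : Finset (Finset ℕ)) : Polynomial ℚ :=
  if k = 0 then wt d P (Finset.Icc 1 d) (Finset.Icc 1 d)
  else if k ≤ d then wt d P (Finset.Icc k d) (Finset.Icc k d \ {d})
  else wt d P ∅ ∅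

/-- The `t`-th left endpoint of a family of cyclic intervals given as a list of pairs. -/
def nthK (L : List (ℕ × ℕ)) (t : ℕ) : ℕ := (L.getD t (0, 0)).1

/-- The `t`-th right endpoint of a family of cyclic intervals given as a list of pairs. -/
def nthL (L : List (ℕ × ℕ)) (t : ℕ) : ℕ := (L.getD t (0, 0)).2

/-- The list `[(k₁,l₁),…,(k_i,l_i)]` is a family of pairwise disjoint cyclic intervals of
`[d]` in standard form: `1 ≤ k₁ ≤ l₁ < k₂ ≤ l₂ < … < k_i ≤ d`, and either
`k_i ≤ l_i ≤ d` or `1 ≤ l_i < k₁` (only the last interval may be wrapped). -/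
def StandardForm (d : ℕ) (L : List (ℕ × ℕ)) : Prop :=
  L ≠ [] ∧ 1 ≤ nthK L 0 ∧ nthK L (L.length - 1) ≤ d ∧
  (∀ t, t + 1 < L.length → nthK L t ≤ nthL L t ∧ nthL L t < nthK L (t + 1)) ∧
  ((nthK L (L.length - 1) ≤ nthL L (L.length - 1) ∧ nthL L (L.length - 1) ≤ d) ∨
    (1 ≤ nthL L (L.length - 1) ∧ nthL L (L.length - 1) < nthK L 0))

/-- The dual family `S'` of a standard-form family
`S = [(k₁,l₁),…,(k_i,l_i)]`, namely
`S' = [(d-k_i+1, d-l_{i-1}), …, (d-k₂+1, d-l₁), (d-k₁+1, d-l_i)]`,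
where endpoints are taken in `{1, …, d}` cyclically (so `d - l` means `d` when `l = d`). -/
def dualFam (d : ℕ) (L : List (ℕ × ℕ)) : List (ℕ × ℕ) :=
  (List.range L.length).map fun t =>
    (d - nthK L (L.length - 1 - t) + 1,
     d - (nthL L ((2 * L.length - 2 - t) % L.length)) % d)

/-- A (generalized) family of cyclic intervals of `[d]`: the empty family `∅`, the full
circle `[1,d]^*`, or a finite list of cyclic intervals. -/
inductive Fam where
  | empty : Fam
  | full : Fam
  | fam (L : List (ℕ × ℕ)) : Fam

/-- The union of the intervals of a generalized family. -/
def famU (d : ℕ) : Fam → Finset ℕ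
  | Fam.empty => ∅
  | Fam.full => Finset.Icc 1 d
  | Fam.fam L => L.foldr (fun p acc => cyclicInterval d p.1 p.2 ∪ acc) ∅

/-- The set of starting points of internal adjacencies of a generalized family. -/
def famAdj (d : ℕ) : Fam → Finset ℕ
  | Fam.empty => ∅
  | Fam.full => Finset.Icc 1 d
  | Fam.fam L => L.foldr (fun p acc => (cyclicInterval d p.1 p.2 \ {p.2}) ∪ acc) ∅

/-- The dual `S'` of a generalized family `S`, with `∅' = [1,d]^*` and `([1,d]^*)' = ∅`. -/
def famDual (d : ℕ) : Fam → Fam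
  | Fam.empty => Fam.full
  | Fam.full => Fam.empty
  | Fam.fam L => Fam.fam (dualFam d L)

/-- The generalized family is in standard form (`∅` and `[1,d]^*` always are). -/
def FamStd (d : ℕ) : Fam → Prop
  | Fam.empty => True
  | Fam.full => True
  | Fam.fam L => StandardForm d L

/-- `binom(n, r)` for an integer lower entry `r`, which is `0` whenever `r < 0`. -/
def chooseZ (n : ℕ) (r : ℤ) : ℕ := if 0 ≤ r then n.choose r.toNat else 0

lemma chooseZ_succ (n : ℕ) (r : ℤ) :
    chooseZ (n + 1) r = chooseZ n r + chooseZ n (r - 1) := by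
  rcases le_or_gt r 0 with h | h
  · rcases eq_or_lt_of_le h with h1 | h1
    · subst h1; simp [chooseZ]
    · simp [chooseZ, not_le.2 h1, show ¬ (0:ℤ) ≤ r - 1 by omega, show ¬ (1:ℤ) ≤ r by omega]
  · have h0 : (0:ℤ) ≤ r := by omega
    have h1 : (0:ℤ) ≤ r - 1 := by omega
    have h2 : r.toNat = (r - 1).toNat + 1 := by omega
    simp only [chooseZ, if_pos h0, if_pos h1, h2, Nat.choose_succ_succ,
      Nat.succ_eq_add_one]
    omega

lemma vand (p q : ℕ) (r : ℤ) :
    chooseZ (p + q) r = ∑ ℓ ∈ range (p + 1), p.choose ℓ * chooseZ q (r - ℓ) := by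
  induction p generalizing r with
  | zero => simp
  | succ p ih =>
    have hpq : p + 1 + q = (p + q) + 1 := by omega
    rw [hpq, chooseZ_succ, ih r, ih (r - 1)]
    have e : ∀ ℓ : ℕ, r - (↑(ℓ + 1) : ℤ) = r - 1 - ℓ := fun ℓ => by push_cast; ring
    rw [Finset.sum_range_succ' (fun ℓ => (p + 1).choose ℓ * chooseZ q (r - ℓ)) (p + 1)]
    simp only [Nat.choose_succ_succ, Nat.succ_eq_add_one, Nat.add_mul,
      Finset.sum_add_distrib, e]
    have hA : ∑ ℓ ∈ range (p + 1), p.choose ℓ * chooseZ q (r - ℓ)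
        = ∑ ℓ ∈ range (p + 1), p.choose (ℓ + 1) * chooseZ q (r - 1 - ℓ)
          + p.choose 0 * chooseZ q r := by
      have h2 : ∑ ℓ ∈ range (p + 1), p.choose ℓ * chooseZ q (r - ℓ)
          = ∑ ℓ ∈ range (p + 2), p.choose ℓ * chooseZ q (r - ℓ) := by
        rw [Finset.sum_range_succ _ (p + 1)]; simp
      rw [h2, Finset.sum_range_succ' (fun ℓ => p.choose ℓ * chooseZ q (r - ℓ)) (p + 1)]
      simp only [e, Nat.cast_zero, sub_zero]
    rw [hA]
    simp only [Nat.cast_zero, sub_zero, Nat.choose_zero_right]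
    omega

lemma trirev {a m ℓ : ℕ} (h : m + ℓ ≤ a) :
    a.choose m * (a - m).choose ℓ = a.choose ℓ * (a - ℓ).choose m := by
  have hm : m ≤ a := by omega
  have hℓ : ℓ ≤ a := by omega
  have h1 : ℓ ≤ a - m := by omega
  have h2 : m ≤ a - ℓ := by omega
  have e1 := Nat.choose_mul_factorial_mul_factorial hm
  have e2 := Nat.choose_mul_factorial_mul_factorial h1
  have e3 := Nat.choose_mul_factorial_mul_factorial hℓ
  have e4 := Nat.choose_mul_factorial_mul_factorial h2
  have hsub : a - m - ℓ = a - ℓ - m := by omega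
  have key : a.choose m * (a - m).choose ℓ * (m.factorial * ℓ.factorial * (a - m - ℓ).factorial)
      = a.choose ℓ * (a - ℓ).choose m * (m.factorial * ℓ.factorial * (a - m - ℓ).factorial) := by
    calc a.choose m * (a - m).choose ℓ * (m.factorial * ℓ.factorial * (a - m - ℓ).factorial)
        = a.choose m * m.factorial * ((a - m).choose ℓ * ℓ.factorial * (a - m - ℓ).factorial) := by
          ring
      _ = a.choose m * m.factorial * (a - m).factorial := by rw [e2]
      _ = a.factorial := e1
      _ = a.choose ℓ * ℓ.factorial * (a - ℓ).factorial := e3.symm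
      _ = a.choose ℓ * ℓ.factorial * ((a - ℓ).choose m * m.factorial * (a - ℓ - m).factorial) := by
          rw [e4]
      _ = _ := by rw [← hsub]; ring
  exact Nat.eq_of_mul_eq_mul_right (by positivity) key

lemma trisum (a ℓ : ℕ) :
    ∑ m ∈ range (a + 1), a.choose m * (a - m).choose ℓ = a.choose ℓ * 2 ^ (a - ℓ) := by
  by_cases hℓ : ℓ ≤ a
  · have step1 : ∑ m ∈ range (a + 1), a.choose m * (a - m).choose ℓ
        = ∑ m ∈ range (a + 1), a.choose ℓ * (a - ℓ).choose m := by
      refine Finset.sum_congr rfl fun m hm => ?_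
      simp only [Finset.mem_range] at hm
      rcases le_or_gt (m + ℓ) a with h | h
      · exact trirev h
      · rw [Nat.choose_eq_zero_of_lt (show a - m < ℓ by omega),
          Nat.choose_eq_zero_of_lt (show a - ℓ < m by omega)]
        simp
    rw [step1, ← Finset.mul_sum]
    congr 1
    rw [← Nat.sum_range_choose (a - ℓ)]
    exact (Finset.sum_subset (Finset.range_subset_range.2 (by omega))
      (fun x _ hx => Nat.choose_eq_zero_of_lt
        (by simp only [Finset.mem_range] at hx ⊢; omega))).symm
  · rw [show a.choose ℓ = 0 from Nat.choose_eq_zero_of_lt (by omega)]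
    simp only [Nat.zero_mul]
    refine Finset.sum_eq_zero fun m hm => ?_
    rw [show (a - m).choose ℓ = 0 from Nat.choose_eq_zero_of_lt (by omega)]
    ring

lemma keyF (a q : ℕ) (r : ℤ) :
    ∑ ℓ ∈ range (a + 1), a.choose ℓ * chooseZ q (r - ℓ) * 2 ^ (a - ℓ)
      = ∑ m ∈ range (a + 1), a.choose m * chooseZ (q + (a - m)) r := by
  have step1 : ∀ m ∈ range (a + 1),
      a.choose m * chooseZ (q + (a - m)) r
        = ∑ ℓ ∈ range (a + 1), a.choose m * ((a - m).choose ℓ * chooseZ q (r - ℓ)) := by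
    intro m hm
    simp only [Finset.mem_range] at hm
    rw [show q + (a - m) = (a - m) + q from by omega, vand, Finset.mul_sum]
    exact Finset.sum_subset (Finset.range_subset_range.2 (by omega)) fun x _ hx => by
      simp only [Finset.mem_range] at hx
      rw [Nat.choose_eq_zero_of_lt (show a - m < x by omega)]
      ring
  rw [Finset.sum_congr rfl step1, Finset.sum_comm]
  refine Finset.sum_congr rfl fun ℓ _ => ?_
  have h2 : ∑ m ∈ range (a + 1), a.choose m * ((a - m).choose ℓ * chooseZ q (r - ℓ))
      = (∑ m ∈ range (a + 1), a.choose m * (a - m).choose ℓ) * chooseZ q (r - ℓ) := by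
    rw [Finset.sum_mul]
    exact Finset.sum_congr rfl fun m _ => by ring
  rw [h2, trisum]
  ring

lemma stepP (a n : ℕ) (r : ℤ) :
    ∑ ℓ ∈ range (a + 2), (a + 1).choose ℓ * chooseZ n (r - ℓ) * 2 ^ (a + 1 - ℓ)
      = 2 * (∑ ℓ ∈ range (a + 1), a.choose ℓ * chooseZ n (r - ℓ) * 2 ^ (a - ℓ))
        + ∑ ℓ ∈ range (a + 1), a.choose ℓ * chooseZ n (r - 1 - ℓ) * 2 ^ (a - ℓ) := by
  rw [Finset.sum_range_succ'
    (fun ℓ => (a + 1).choose ℓ * chooseZ n (r - ℓ) * 2 ^ (a + 1 - ℓ)) (a + 1)]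
  have e : ∀ ℓ : ℕ, r - (↑(ℓ + 1) : ℤ) = r - 1 - ℓ := fun ℓ => by push_cast; ring
  simp only [Nat.choose_succ_succ, Nat.succ_eq_add_one, Nat.add_mul, Finset.sum_add_distrib, e,
    Nat.succ_sub_succ, Nat.cast_zero, sub_zero, Nat.sub_zero, Nat.choose_zero_right, one_mul]
  have hB : 2 * ∑ ℓ ∈ range (a + 1), a.choose ℓ * chooseZ n (r - ℓ) * 2 ^ (a - ℓ)
      = ∑ ℓ ∈ range (a + 1), a.choose (ℓ + 1) * chooseZ n (r - 1 - ℓ) * 2 ^ (a - ℓ)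
        + chooseZ n r * 2 ^ (a + 1) := by
    have h1 : 2 * ∑ ℓ ∈ range (a + 1), a.choose ℓ * chooseZ n (r - ℓ) * 2 ^ (a - ℓ)
        = ∑ ℓ ∈ range (a + 2), a.choose ℓ * chooseZ n (r - ℓ) * 2 ^ (a + 1 - ℓ) := by
      rw [Finset.mul_sum, Finset.sum_range_succ _ (a + 1)]
      rw [show a.choose (a + 1) = 0 from Nat.choose_eq_zero_of_lt (by omega)]
      simp only [Nat.zero_mul, Nat.mul_zero, zero_mul, Nat.add_zero, add_zero]
      refine Finset.sum_congr rfl fun ℓ hℓ => ?_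
      simp only [Finset.mem_range] at hℓ
      rw [show a + 1 - ℓ = (a - ℓ) + 1 from by omega, pow_succ]
      ring
    rw [h1, Finset.sum_range_succ'
      (fun ℓ => a.choose ℓ * chooseZ n (r - ℓ) * 2 ^ (a + 1 - ℓ)) (a + 1)]
    simp only [e, Nat.succ_sub_succ, Nat.cast_zero, sub_zero, Nat.choose_zero_right, one_mul, Nat.sub_zero,
      Nat.add_sub_cancel]
  omega


/-- For integers `d > 0`, `i > 0`, `0 ≤ j ≤ d-i`, `j ≤ k ≤ d`:
`Σ_{ℓ=0}^{i} binom(i,ℓ)·binom(d-i-j, d-k-ℓ)·2^{i-ℓ}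
  = Σ_{m=0}^{i-1} binom(i-1,m)·(2·binom(d-m-j-1, d-k) + binom(d-m-j-1, d-k-1))`,
with the convention `binom(n,r) = 0` for `r < 0` or `r > n`. -/
theorem stmt5 (d i j k : ℕ) (hd : 0 < d) (hi : 0 < i) (hid : i ≤ d)
    (hj : j ≤ d - i) (hk1 : j ≤ k) (hk2 : k ≤ d) :
    ∑ ℓ ∈ Finset.range (i + 1),
        i.choose ℓ * chooseZ (d - i - j) ((d : ℤ) - k - ℓ) * 2 ^ (i - ℓ) =
      ∑ m ∈ Finset.range i,
        (i - 1).choose m *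
          (2 * chooseZ (d - m - j - 1) ((d : ℤ) - k) +
            chooseZ (d - m - j - 1) ((d : ℤ) - k - 1)) := by
  obtain ⟨a, rfl⟩ : ∃ a, i = a + 1 := ⟨i - 1, by omega⟩
  have hij : a + 1 + j ≤ d := by omega
  set r : ℤ := (d : ℤ) - k with hr
  rw [show a + 1 + 1 = a + 2 from rfl, stepP, keyF a (d - (a + 1) - j) r,
    keyF a (d - (a + 1) - j) (r - 1), Finset.mul_sum, ← Finset.sum_add_distrib]
  simp only [Nat.add_sub_cancel]
  refine Finset.sum_congr rfl fun m hm => ?_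
  simp only [Finset.mem_range] at hm
  rw [show d - m - j - 1 = d - (a + 1) - j + (a - m) from by omega]
  ring
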